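/- For every finitely supported f : ℕ → ℂ: (T_{m₁^c→1}(Δ_{G₁^c}(T_{m₁^c→1}^{−1} f)))(n) = (e^{1/2} + e^{−1/2})·f(n) − f(n−1) − f(n+1) for every n ≥ 1, and (T_{m₁^c→1}(Δ_{G₁^c}(T_{m₁^c→1}^{−1} f)))(0) = e^{−1/2}·f(0) − f(1). Equivalently, on finitely supported functions, T_{m₁^c→1} ∘ Δ_{G₁^c} ∘ T_{m₁^c→1}^{−1} = Δ_ℕ + (1 − e^{1/2})·𝟙₀ + (e^{1/2} + e^{−1/2} − 2)·Id. -/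
import Mathlib


noncomputable section

open Complex

/-- The Laplacian of the weighted graph `(E, V, m)`. -/
def lap {V : Type*} (E : V → V → ℝ) (m : V → ℝ) (f : V → ℂ) : V → ℂ :=
  fun x => (1 / (m x : ℂ)) * ∑' y : V, ((E x y : ℝ) : ℂ) * (f x - f y)

/-- Edge weights of the cusp half-line: `E₁^c(n, n+1) = e^{−(2n+1)/2}`. -/
def e1C : ℕ → ℕ → ℝ := fun n k =>
  if k = n + 1 then Real.exp (-((2 * (n : ℝ) + 1) / 2))
  else if n = k + 1 then Real.exp (-((2 * (k : ℝ) + 1) / 2)) else 0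

/-- Weight of the cusp half-line: `m₁^c(n) = e^{−n}`. -/
def m1C : ℕ → ℝ := fun n => Real.exp (-(n : ℝ))

/-- The gauge transform `T_{m→m'} f = (x ↦ √(m(x)/m'(x))·f(x))`. -/
def Tw {V : Type*} (m m' : V → ℝ) (f : V → ℂ) : V → ℂ :=
  fun x => (Real.sqrt (m x / m' x) : ℂ) * f x

/-- `(Δ_ℕ f)(n) = 2f(n) − f(n−1) − f(n+1)` for `n ≥ 1`, `(Δ_ℕ f)(0) = f(0) − f(1)`. -/
def deltaN (f : ℕ → ℂ) : ℕ → ℂ := fun n =>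
  if n = 0 then f 0 - f 1 else 2 * f n - f (n - 1) - f (n + 1)

/-- `(𝟙₀ f)(n) = f(0)` if `n = 0`, and `0` otherwise. -/
def One0 (f : ℕ → ℂ) : ℕ → ℂ := fun n => if n = 0 then f 0 else 0


lemma sqrt_exp' (x : ℝ) : Real.sqrt (Real.exp x) = Real.exp (x / 2) := by
  rw [show Real.exp x = Real.exp (x/2) ^ 2 by rw [sq, ← Real.exp_add]; ring_nf]
  exact Real.sqrt_sq (Real.exp_pos _).le

lemma lap_form (g : ℕ → ℂ) (n : ℕ) :
    lap e1C m1C g n = (1 / (m1C n : ℂ)) *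
      (((e1C n (n-1) : ℝ) : ℂ) * (g n - g (n-1)) +
       ((e1C n (n+1) : ℝ) : ℂ) * (g n - g (n+1))) := by
  unfold lap
  congr 1
  rw [tsum_eq_sum (s := {n-1, n+1}) ?_]
  · rw [Finset.sum_insert (by simp only [Finset.mem_singleton]; omega),
      Finset.sum_singleton]
  · intro y hy
    simp only [Finset.mem_insert, Finset.mem_singleton, not_or] at hy
    have h1 : y ≠ n + 1 := hy.2
    have h2 : n ≠ y + 1 := by omega
    simp [e1C, h1, h2]

lemma main_pos (f : ℕ → ℂ) (n : ℕ) (hn : 1 ≤ n) :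
    Tw m1C (fun _ => 1) (lap e1C m1C (Tw (fun _ => 1) m1C f)) n
      = ((Real.exp (1 / 2) + Real.exp (-(1 / 2)) : ℝ) : ℂ) * f n
          - f (n - 1) - f (n + 1) := by
  have hn1 : n - 1 + 1 = n := Nat.succ_pred_eq_of_pos hn
  have e1 : e1C n (n-1) = Real.exp (-((2 * ((n:ℝ) - 1) + 1) / 2)) := by
    have h1 : (n:ℕ) - 1 ≠ n + 1 := by omega
    rw [e1C]
    simp only [h1, if_false, if_neg, hn1, if_pos rfl]
    push_cast [Nat.cast_sub hn]
    ring_nf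
  have e2 : e1C n (n+1) = Real.exp (-((2 * (n:ℝ) + 1) / 2)) := by simp [e1C]
  rw [Tw, lap_form, e1, e2]
  simp only [Tw, div_one, one_div, m1C, Real.sqrt_inv, ← Real.exp_neg, sqrt_exp']
  push_cast [Nat.cast_sub hn, Complex.ofReal_exp]
  rw [← Complex.exp_neg]
  ring_nf
  simp only [← Complex.exp_add]
  ring_nf
  simp only [← Complex.exp_add, Complex.exp_zero]
  ring_nf
  simp only [mul_assoc, ← Complex.exp_add]
  ring_nf

lemma main_zero (f : ℕ → ℂ) :
    Tw m1C (fun _ => 1) (lap e1C m1C (Tw (fun _ => 1) m1C f)) 0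
      = ((Real.exp (-(1 / 2)) : ℝ) : ℂ) * f 0 - f 1 := by
  rw [Tw, lap_form]
  simp only [Tw, div_one, one_div, m1C, Real.sqrt_inv, ← Real.exp_neg, sqrt_exp']
  norm_num [e1C]
  ring_nf
  simp only [mul_assoc, ← Complex.exp_add, Complex.exp_zero]
  ring_nf
  simp

/-- **Gauge transform of the cusp half-line Laplacian:**
`T_{m₁^c→1} ∘ Δ_{G₁^c} ∘ T_{m₁^c→1}⁻¹ = Δ_ℕ + (1 − e^{1/2})·𝟙₀ + (e^{1/2} + e^{−1/2} − 2)·Id`. -/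
theorem stmt6 (f : ℕ → ℂ) (hf : (Function.support f).Finite) :
    (∀ n : ℕ, 1 ≤ n →
      Tw m1C (fun _ => 1) (lap e1C m1C (Tw (fun _ => 1) m1C f)) n
        = ((Real.exp (1 / 2) + Real.exp (-(1 / 2)) : ℝ) : ℂ) * f n
            - f (n - 1) - f (n + 1)) ∧
    (Tw m1C (fun _ => 1) (lap e1C m1C (Tw (fun _ => 1) m1C f)) 0
        = ((Real.exp (-(1 / 2)) : ℝ) : ℂ) * f 0 - f 1) ∧
    (∀ n : ℕ,
      Tw m1C (fun _ => 1) (lap e1C m1C (Tw (fun _ => 1) m1C f)) n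
        = deltaN f n + ((1 - Real.exp (1 / 2) : ℝ) : ℂ) * One0 f n
            + ((Real.exp (1 / 2) + Real.exp (-(1 / 2)) - 2 : ℝ) : ℂ) * f n) := by
  refine ⟨fun n hn => main_pos f n hn, main_zero f, fun n => ?_⟩
  rcases Nat.eq_zero_or_pos n with h | h
  · subst h
    rw [main_zero]
    simp only [deltaN, One0, if_pos rfl]
    push_cast
    ring
  · rw [main_pos f n h]
    have hne : n ≠ 0 := by omega
    simp only [deltaN, One0, if_neg hne]
    push_cast
    ring
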